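/- Let Σ < H be a non-trivial subgroup of an infinite group H. If for all k ≥ 2, all tuples (x₁,…,x_k) of pairwise distinct elements of H, and every finite subset F ⊂ H the set {h ∈ H : h·xᵢ ∉ ΣF for all i and h·xᵢ·x_j⁻¹·h⁻¹ ∉ Σ for all i ≠ j} is non-empty, then for all n ≥ 1, all x₁,…,xₙ ∈ H \ {1}, and every finite F ⊂ H, the set {h ∈ H : h·xᵢ ∉ ΣF for all i, and h·xᵢ·h⁻¹ ∉ Σ for all i} is non-empty. -/
import Mathlib


/-- The set ΣF = {σf : σ ∈ Σ, f ∈ F}. -/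
def cosetProd {H : Type*} [Group H] (A : Subgroup H) (F : Set H) : Set H :=
  {h | ∃ σ ∈ A, ∃ f ∈ F, h = σ * f}

/-- A subgroup `A ≤ H` is highly core-free if for every finite `F ⊆ H`, every `n ≥ 1`
and all nonempty `S₁, …, Sₙ ⊆ H` covering `H \ ΣF`, some `Sₖ` has trivial core
`⋂_{h ∈ Sₖ} h⁻¹ A h = {1}`. -/
def HighlyCoreFree {H : Type*} [Group H] (A : Subgroup H) : Prop :=
  ∀ F : Set H, F.Finite → ∀ n : ℕ, 1 ≤ n → ∀ S : Fin n → Set H,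
    (∀ k, (S k).Nonempty) → (∀ h : H, h ∉ cosetProd A F → ∃ k, h ∈ S k) →
    ∃ k, ∀ x : H, (∀ h ∈ S k, h * x * h⁻¹ ∈ A) → x = 1
/-- Implication (3 ⟹ 2) in the characterisation lemma. -/
theorem condition3_implies_condition2 {H : Type*} [Group H] [Infinite H] (A : Subgroup H)
    (hne : A ≠ ⊥)
    (h3 : ∀ k : ℕ, 2 ≤ k → ∀ x : Fin k → H, Function.Injective x →
      ∀ F : Set H, F.Finite →
        ∃ h : H, (∀ i, h * x i ∉ cosetProd A F) ∧
          (∀ i j, i ≠ j → h * (x i * (x j)⁻¹) * h⁻¹ ∉ A)) :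
    ∀ n : ℕ, 1 ≤ n → ∀ x : Fin n → H, (∀ i, x i ≠ 1) → ∀ F : Set H, F.Finite →
      ∃ h : H, (∀ i, h * x i ∉ cosetProd A F) ∧ (∀ i, h * x i * h⁻¹ ∉ A) := by
  intro n hn x hx F hF
  classical
  -- the finite set of distinct values {x i} ∪ {1}
  set s : Finset H := insert 1 (Finset.image x Finset.univ) with hs
  have h1s : (1 : H) ∈ s := Finset.mem_insert_self _ _
  have hxs : ∀ i, x i ∈ s := fun i =>
    Finset.mem_insert_of_mem (Finset.mem_image_of_mem x (Finset.mem_univ i))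
  have hcard : 2 ≤ s.card := by
    have hx0 : x ⟨0, hn⟩ ∈ s := hxs _
    have : ({1, x ⟨0, hn⟩} : Finset H) ⊆ s := by
      intro a ha
      rcases Finset.mem_insert.mp ha with rfl | ha
      · exact h1s
      · simpa using Finset.mem_singleton.mp ha ▸ hx0
    calc 2 = ({1, x ⟨0, hn⟩} : Finset H).card := by
              rw [Finset.card_insert_of_notMem (by simp [Ne.symm (hx ⟨0, hn⟩)]),
                Finset.card_singleton]
         _ ≤ s.card := Finset.card_le_card this
  -- enumerate s injectively
  let e := s.equivFin
  let y : Fin s.card → H := fun i => (e.symm i : H)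
  have hyinj : Function.Injective y :=
    Subtype.val_injective.comp e.symm.injective
  obtain ⟨h, hA, hB⟩ := h3 s.card hcard y hyinj F hF
  refine ⟨h, fun i => ?_, fun i => ?_⟩
  · have : y (e ⟨x i, hxs i⟩) = x i := by simp [y]
    simpa [this] using hA (e ⟨x i, hxs i⟩)
  · have hne' : e ⟨x i, hxs i⟩ ≠ e ⟨1, h1s⟩ := by
      intro hcon
      exact hx i (congrArg Subtype.val (e.injective hcon))
    have := hB (e ⟨x i, hxs i⟩) (e ⟨1, h1s⟩) hne'
    simpa [y] using this
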